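/- If β ≤ 1 and n > 2, then the upper envelope of f over X ∩ W_{ij}, i.e. the convex hull of the hypograph {(x,z) ∈ (X ∩ W_{ij}) × ℝ : z ≤ f(x)}, equals H = {(x,z) ∈ ℝ₊ⁿ × ℝ : z ≤ ∏_{k=1}^n x_k^{a_k}, z ≤ u, p xᵢ ≤ x_j ≤ q xᵢ, and ∏_{k=1}^n x_k^{a_k} ≥ ℓ}. -/

import Mathlib

open Real Finset

lemma amgm_le_one {n : ℕ} (a t : Fin n → ℝ) (ha : ∀ k, 0 ≤ a k) (ht : ∀ k, 0 ≤ t k)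
    (hβ : ∑ k, a k ≤ 1) :
    ∏ k, t k ^ a k ≤ ∑ k, a k * t k + (1 - ∑ k, a k) := by
  have h := Real.geom_mean_le_arith_mean_weighted (Finset.univ : Finset (Option (Fin n)))
    (fun o => o.elim (1 - ∑ k, a k) a) (fun o => o.elim 1 t)
    (by rintro (_|k) _ <;> simp [ha, sub_nonneg.2 hβ])
    (by simp [Fintype.sum_option]) (by rintro (_|k) _ <;> simp [ht])
  simpa [Fintype.prod_option, Fintype.sum_option, add_comm] using h

/-- scaling-monotonicity piece -/
lemma mono_part {n : ℕ} (a : Fin n → ℝ) (ha : ∀ k, 0 < a k) (hβ : ∑ k, a k ≤ 1)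
    (mu : ℝ) (y c : Fin n → ℝ) (hmu : 0 < mu) (hmu1 : mu ≤ 1)
    (hy : ∀ k, 0 ≤ y k) (hc : ∀ k, mu * y k ≤ c k) :
    mu * ∏ k, y k ^ a k ≤ ∏ k, c k ^ a k := by
  have hprod : (0:ℝ) ≤ ∏ k, y k ^ a k :=
    Finset.prod_nonneg fun k _ => Real.rpow_nonneg (hy k) _
  have h1 : mu * ∏ k, y k ^ a k ≤ mu ^ (∑ k, a k) * ∏ k, y k ^ a k := by
    have : mu ^ (1:ℝ) ≤ mu ^ (∑ k, a k) :=
      Real.rpow_le_rpow_of_exponent_ge hmu hmu1 hβ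
    rw [Real.rpow_one] at this
    exact mul_le_mul_of_nonneg_right this hprod
  have h2 : mu ^ (∑ k, a k) * ∏ k, y k ^ a k = ∏ k, (mu * y k) ^ a k := by
    rw [Real.rpow_sum_of_pos hmu, ← Finset.prod_mul_distrib]
    exact Finset.prod_congr rfl fun k _ => (Real.mul_rpow hmu.le (hy k)).symm
  calc mu * ∏ k, y k ^ a k ≤ ∏ k, (mu * y k) ^ a k := by rw [← h2]; exact h1
    _ ≤ ∏ k, c k ^ a k := Finset.prod_le_prod
        (fun k _ => Real.rpow_nonneg (mul_nonneg hmu.le (hy k)) _)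
        (fun k _ => Real.rpow_le_rpow (mul_nonneg hmu.le (hy k)) (hc k) (ha k).le)

/-- concavity inequality -/
lemma concave_ineq {n : ℕ} (a : Fin n → ℝ) (ha : ∀ k, 0 < a k) (hβ : ∑ k, a k ≤ 1)
    (x y : Fin n → ℝ) (hx : ∀ k, 0 ≤ x k) (hy : ∀ k, 0 ≤ y k)
    (lam mu : ℝ) (hlam : 0 ≤ lam) (hmu : 0 ≤ mu) (hsum : lam + mu = 1) :
    lam * ∏ k, x k ^ a k + mu * ∏ k, y k ^ a k
      ≤ ∏ k, (lam * x k + mu * y k) ^ a k := by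
  rcases eq_or_lt_of_le hlam with h0 | hlam'
  · have : mu = 1 := by linarith
    simp [← h0, this]
  rcases eq_or_lt_of_le hmu with h0 | hmu'
  · have : lam = 1 := by linarith
    simp [← h0, this]
  set c : Fin n → ℝ := fun k => lam * x k + mu * y k with hc
  have hcnn : ∀ k, 0 ≤ c k := fun k =>
    add_nonneg (mul_nonneg hlam (hx k)) (mul_nonneg hmu (hy k))
  by_cases hxz : ∃ k, x k = 0
  · obtain ⟨k, hk⟩ := hxz
    have hfx : ∏ m, x m ^ a m = 0 :=
      Finset.prod_eq_zero (Finset.mem_univ k) (by rw [hk]; exact Real.zero_rpow (ha k).ne')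
    rw [hfx, mul_zero, zero_add]
    exact mono_part a ha hβ mu y c hmu' (by linarith) hy
      (fun m => le_add_of_nonneg_left (mul_nonneg hlam (hx m)))
  by_cases hyz : ∃ k, y k = 0
  · obtain ⟨k, hk⟩ := hyz
    have hfy : ∏ m, y m ^ a m = 0 :=
      Finset.prod_eq_zero (Finset.mem_univ k) (by rw [hk]; exact Real.zero_rpow (ha k).ne')
    rw [hfy, mul_zero, add_zero]
    exact mono_part a ha hβ lam x c hlam' (by linarith) hx
      (fun m => le_add_of_nonneg_right (mul_nonneg hmu (hy m)))
  push_neg at hxz hyz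
  have hxp : ∀ k, 0 < x k := fun k => (hx k).lt_of_ne' (hxz k)
  have hyp : ∀ k, 0 < y k := fun k => (hy k).lt_of_ne' (hyz k)
  have hcp : ∀ k, 0 < c k := fun k =>
    add_pos (mul_pos hlam' (hxp k)) (mul_pos hmu' (hyp k))
  have hfc : (0:ℝ) ≤ ∏ k, c k ^ a k :=
    Finset.prod_nonneg fun k _ => Real.rpow_nonneg (hcnn k) _
  -- factorizations
  have hfact : ∀ w : Fin n → ℝ, (∀ k, 0 ≤ w k) →
      ∏ k, w k ^ a k = (∏ k, c k ^ a k) * ∏ k, (w k / c k) ^ a k := by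
    intro w hw
    rw [← Finset.prod_mul_distrib]
    refine Finset.prod_congr rfl fun k _ => ?_
    rw [← Real.mul_rpow (hcp k).le (div_nonneg (hw k) (hcp k).le),
      mul_div_cancel₀ _ (hcp k).ne']
  have hP := amgm_le_one a (fun k => x k / c k) (fun k => (ha k).le)
    (fun k => div_nonneg (hx k) (hcp k).le) hβ
  have hQ := amgm_le_one a (fun k => y k / c k) (fun k => (ha k).le)
    (fun k => div_nonneg (hy k) (hcp k).le) hβ
  have hkey : lam * ∏ k, (x k / c k) ^ a k + mu * ∏ k, (y k / c k) ^ a k ≤ 1 := by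
    have hsum2 : lam * (∑ k, a k * (x k / c k)) + mu * (∑ k, a k * (y k / c k))
        = ∑ k, a k := by
      rw [Finset.mul_sum, Finset.mul_sum, ← Finset.sum_add_distrib]
      refine Finset.sum_congr rfl fun k _ => ?_
      have hck : c k ≠ 0 := (hcp k).ne'
      have hcc : lam * x k + mu * y k = c k := rfl
      rw [show lam * (a k * (x k / c k)) + mu * (a k * (y k / c k))
          = a k * ((lam * x k + mu * y k) / c k) by ring, hcc, div_self hck, mul_one]
    nlinarith [hP, hQ, hlam'.le, hmu'.le]
  calc lam * ∏ k, x k ^ a k + mu * ∏ k, y k ^ a k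
      = (∏ k, c k ^ a k) * (lam * ∏ k, (x k / c k) ^ a k + mu * ∏ k, (y k / c k) ^ a k) := by
        rw [hfact x hx, hfact y hy]; ring
    _ ≤ (∏ k, c k ^ a k) * 1 := mul_le_mul_of_nonneg_left hkey hfc
    _ = ∏ k, c k ^ a k := mul_one _

set_option maxHeartbeats 1000000 in
/-- For `β ≤ 1` and `n > 2`, the upper envelope of `f` over `X ∩ W_{ij}`
equals `H`. -/
theorem upper_envelope_eq_of_beta_le_one (n : ℕ) (hn : 2 < n) (a : Fin n → ℝ)
    (ha : ∀ k, 0 < a k) (ℓ u : ℝ) (hℓ : 0 < ℓ) (hℓu : ℓ < u)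
    (i j : Fin n) (hij : i ≠ j) (p q : ℝ) (hp : 0 < p) (hpq : p < q)
    (β : ℝ) (hβ : β = ∑ k, a k) (hβ1 : β ≤ 1) :
    convexHull ℝ
      {xz : (Fin n → ℝ) × ℝ |
        ((∀ k, 0 ≤ xz.1 k) ∧
          ℓ ≤ ∏ k, xz.1 k ^ a k ∧ (∏ k, xz.1 k ^ a k) ≤ u ∧
          p * xz.1 i ≤ xz.1 j ∧ xz.1 j ≤ q * xz.1 i) ∧
        xz.2 ≤ ∏ k, xz.1 k ^ a k} =
    {xz : (Fin n → ℝ) × ℝ |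
        (∀ k, 0 ≤ xz.1 k) ∧
        xz.2 ≤ ∏ k, xz.1 k ^ a k ∧
        xz.2 ≤ u ∧
        p * xz.1 i ≤ xz.1 j ∧ xz.1 j ≤ q * xz.1 i ∧
        ℓ ≤ ∏ k, xz.1 k ^ a k} := by
  have hβ' : ∑ k, a k ≤ 1 := hβ ▸ hβ1
  refine Set.Subset.antisymm (convexHull_min ?_ ?_) ?_
  · rintro ⟨x, z⟩ ⟨⟨h0, hl, hu', hc1, hc2⟩, hz⟩
    exact ⟨h0, hz, le_trans hz hu', hc1, hc2, hl⟩
  · rintro ⟨x, z⟩ ⟨h0, hzf, hzu, hc1, hc2, hl⟩ ⟨x', z'⟩ ⟨h0', hzf', hzu', hc1', hc2', hl'⟩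
      lam mu hlam hmu hsum
    have key := concave_ineq a ha hβ' x x' h0 h0' lam mu hlam hmu hsum
    simp only [Set.mem_setOf_eq, Prod.smul_mk, Prod.mk_add_mk, Pi.add_apply, Pi.smul_apply,
      smul_eq_mul]
    have hfx : (0:ℝ) ≤ ∏ k, x k ^ a k := le_trans hℓ.le hl
    refine ⟨fun k => add_nonneg (mul_nonneg hlam (h0 k)) (mul_nonneg hmu (h0' k)),
      ?_, ?_, ?_, ?_, ?_⟩
    · exact le_trans (add_le_add (mul_le_mul_of_nonneg_left hzf hlam)
        (mul_le_mul_of_nonneg_left hzf' hmu)) key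
    · nlinarith [mul_le_mul_of_nonneg_left hzu hlam, mul_le_mul_of_nonneg_left hzu' hmu]
    · nlinarith [mul_le_mul_of_nonneg_left hc1 hlam, mul_le_mul_of_nonneg_left hc1' hmu]
    · nlinarith [mul_le_mul_of_nonneg_left hc2 hlam, mul_le_mul_of_nonneg_left hc2' hmu]
    · refine le_trans ?_ (le_trans (add_le_add (mul_le_mul_of_nonneg_left hl hlam)
        (mul_le_mul_of_nonneg_left hl' hmu)) key)
      nlinarith
  · rintro ⟨x, z⟩ ⟨h0, hzf, hzu, hc1, hc2, hl⟩
    by_cases hfu : ∏ m, x m ^ a m ≤ u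
    · exact subset_convexHull ℝ _ ⟨⟨h0, hl, hfu, hc1, hc2⟩, hzf⟩
    push_neg at hfu
    obtain ⟨k, hki, hkj⟩ : ∃ k : Fin n, k ≠ i ∧ k ≠ j := by
      by_contra h
      push_neg at h
      have hsub : (Finset.univ : Finset (Fin n)) ⊆ {i, j} := by
        intro m _
        rcases eq_or_ne m i with rfl | hmi
        · simp
        · simp [h m hmi]
      have := Finset.card_le_card hsub
      have h2 : ({i, j} : Finset (Fin n)).card ≤ 2 := Finset.card_insert_le _ _ |>.trans (by simp)
      simp only [Finset.card_univ, Fintype.card_fin] at this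
      omega
    set y : ℝ → (Fin n → ℝ) := fun s m => if m = k then (1 + s) * x m else (1 - s) * x m
      with hy
    have hcont : Continuous fun s : ℝ => ∏ m, y s m ^ a m := by
      apply continuous_finset_prod
      intro m _
      apply (Real.continuous_rpow_const (ha m).le).comp
      simp only [hy]
      split_ifs <;> fun_prop
    have hg0 : ∏ m, y 0 m ^ a m = ∏ m, x m ^ a m := by
      refine Finset.prod_congr rfl fun m _ => ?_
      simp only [hy]
      split_ifs <;> norm_num
    have hg1 : ∏ m, y 1 m ^ a m = 0 := by
      refine Finset.prod_eq_zero (Finset.mem_univ i) ?_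
      simp only [hy, if_neg (Ne.symm hki)]
      norm_num [Real.zero_rpow (ha i).ne']
    have hgm1 : ∏ m, y (-1) m ^ a m = 0 := by
      refine Finset.prod_eq_zero (Finset.mem_univ k) ?_
      simp only [hy, if_pos rfl]
      norm_num [Real.zero_rpow (ha k).ne']
    have hu0 : (0:ℝ) ≤ u := le_of_lt (lt_trans hℓ hℓu)
    obtain ⟨s₁, hs₁, hgs₁⟩ : ∃ s₁ ∈ Set.Icc (-1:ℝ) 0, ∏ m, y s₁ m ^ a m = u := by
      have h := intermediate_value_Icc (by norm_num : (-1:ℝ) ≤ 0) hcont.continuousOn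
      have : u ∈ Set.Icc (∏ m, y (-1) m ^ a m) (∏ m, y 0 m ^ a m) := by
        rw [hgm1, hg0]; exact ⟨hu0, hfu.le⟩
      obtain ⟨s₁, hs₁, hgs₁⟩ := h this
      exact ⟨s₁, hs₁, hgs₁⟩
    obtain ⟨s₂, hs₂, hgs₂⟩ : ∃ s₂ ∈ Set.Icc (0:ℝ) 1, ∏ m, y s₂ m ^ a m = u := by
      have h := intermediate_value_Icc' (by norm_num : (0:ℝ) ≤ 1) hcont.continuousOn
      have : u ∈ Set.Icc (∏ m, y 1 m ^ a m) (∏ m, y 0 m ^ a m) := by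
        rw [hg1, hg0]; exact ⟨hu0, hfu.le⟩
      obtain ⟨s₂, hs₂, hgs₂⟩ := h this
      exact ⟨s₂, hs₂, hgs₂⟩
    have hs₁0 : s₁ < 0 := by
      rcases lt_or_eq_of_le hs₁.2 with h | h
      · exact h
      · rw [h, hg0] at hgs₁; linarith
    have hs₂0 : 0 < s₂ := by
      rcases lt_or_eq_of_le hs₂.1 with h | h
      · exact h
      · rw [← h, hg0] at hgs₂; linarith
    have hd : (0:ℝ) < s₂ - s₁ := by linarith
    set lam := s₂ / (s₂ - s₁) with hlamdef
    set mu := (-s₁) / (s₂ - s₁) with hmudef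
    have hlam : 0 ≤ lam := div_nonneg hs₂0.le hd.le
    have hmu : 0 ≤ mu := div_nonneg (by linarith) hd.le
    have hsum1 : lam + mu = 1 := by
      rw [hlamdef, hmudef, ← add_div, div_eq_one_iff_eq hd.ne']; ring
    have hcomb : lam * s₁ + mu * s₂ = 0 := by
      rw [hlamdef, hmudef]; field_simp; ring
    have hmem : ∀ s : ℝ, -1 ≤ s → s ≤ 1 → (∏ m, y s m ^ a m) = u →
        (y s, z) ∈ {xz : (Fin n → ℝ) × ℝ |
          ((∀ m, 0 ≤ xz.1 m) ∧
            ℓ ≤ ∏ m, xz.1 m ^ a m ∧ (∏ m, xz.1 m ^ a m) ≤ u ∧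
            p * xz.1 i ≤ xz.1 j ∧ xz.1 j ≤ q * xz.1 i) ∧
          xz.2 ≤ ∏ m, xz.1 m ^ a m} := by
      intro s hsm hsp hgs
      have h1s : (0:ℝ) ≤ 1 - s := by linarith
      have h1s' : (0:ℝ) ≤ 1 + s := by linarith
      have hyi : y s i = (1 - s) * x i := by simp [hy, (Ne.symm hki : i ≠ k)]
      have hyj : y s j = (1 - s) * x j := by simp [hy, (Ne.symm hkj : j ≠ k)]
      refine ⟨⟨fun m => ?_, ?_, ?_, ?_, ?_⟩, ?_⟩
      · simp only [hy]; split_ifs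
        · exact mul_nonneg h1s' (h0 m)
        · exact mul_nonneg h1s (h0 m)
      · rw [hgs]; linarith
      · rw [hgs]
      · show p * y s i ≤ y s j
        rw [hyi, hyj]
        nlinarith [mul_le_mul_of_nonneg_left hc1 h1s]
      · show y s j ≤ q * y s i
        rw [hyi, hyj]
        nlinarith [mul_le_mul_of_nonneg_left hc2 h1s]
      · rw [hgs]; exact hzu
    have hm1 := hmem s₁ hs₁.1 (by linarith) hgs₁
    have hm2 := hmem s₂ (by linarith) hs₂.2 hgs₂
    have hdne : s₂ - s₁ ≠ 0 := hd.ne'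
    have hx_eq : ((x, z) : (Fin n → ℝ) × ℝ) = lam • (y s₁, z) + mu • (y s₂, z) := by
      refine Prod.ext ?_ ?_
      · funext m
        simp only [Prod.fst_add, Prod.smul_mk, Pi.add_apply, Pi.smul_apply, smul_eq_mul, hy]
        rw [hlamdef, hmudef]
        split_ifs <;> field_simp <;> ring
      · simp only [Prod.snd_add, Prod.smul_mk, smul_eq_mul]
        rw [hlamdef, hmudef]
        field_simp
        ring
    rw [hx_eq]
    exact (convex_convexHull ℝ _) (subset_convexHull ℝ _ hm1) (subset_convexHull ℝ _ hm2)
      hlam hmu hsum1
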